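/- The q-difference operator in the variable x applied to Ψ₁ gives D_{x,q} Ψ₁(q^a,p^b;p^c,q^d;q,p,x,y) = [(1−q^a)/((1−q)(1−q^d))]·Ψ₁(q^{a+1},p^b;p^c,q^{d+1};q,p,x,y), and more generally iterating r times, D_{x,q}^r Ψ₁(q^a,p^b;p^c,q^d;q,p,x,y) = [(q^a;q)_r / ((1−q)^r (q^d;q)_r)]·Ψ₁(q^{a+r},p^b;p^c,q^{d+r};q,p,x,y). -/

import Mathlib

open scoped BigOperators
open Filter

/-- q-shifted factorial `(z;q)_k`. -/
noncomputable def qPoch (q z : ℂ) (k : ℕ) : ℂ :=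
  ∏ r ∈ Finset.range k, (1 - z * q ^ r)

/-- infinite q-shifted factorial `(z;q)_∞`. -/
noncomputable def qPochInf (q z : ℂ) : ℂ := ∏' r : ℕ, (1 - z * q ^ r)

/-- bibasic Humbert function `Ψ₁(A,B;C,D;q,p,x,y)` with `A=qᵃ, B=pᵇ, C=pᶜ, D=q^d`. -/
noncomputable def Psi1 (q p A B C D x y : ℂ) : ℂ :=
  ∑' kl : ℕ × ℕ,
    qPoch q A (kl.1 + kl.2) * qPoch p B kl.2 /
      (qPoch p C kl.2 * qPoch q D kl.1 * qPoch q q kl.1 * qPoch p p kl.2) *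
      x ^ kl.1 * y ^ kl.2

/-- bibasic Humbert function `Ψ₂(A;B,C;q,p,x,y)` with `A=qᵃ, B=pᵇ, C=qᶜ`. -/
noncomputable def Psi2 (q p A B C x y : ℂ) : ℂ :=
  ∑' kl : ℕ × ℕ,
    qPoch q A (kl.1 + kl.2) /
      (qPoch p B kl.2 * qPoch q C kl.1 * qPoch q q kl.1 * qPoch p p kl.2) *
      x ^ kl.1 * y ^ kl.2

/-- the q-difference operator `D_{x,q}`. -/
noncomputable def qDiff (q : ℂ) (f : ℂ → ℂ) : ℂ → ℂ :=
  fun x => (f x - f (q * x)) / ((1 - q) * x)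

/-- basic hypergeometric series `₂φ₁(A,B;C;q,x)`. -/
noncomputable def phi21 (q A B C x : ℂ) : ℂ :=
  ∑' k : ℕ, qPoch q A k * qPoch q B k / (qPoch q C k * qPoch q q k) * x ^ k

/-- basic confluent hypergeometric series `₁φ₁(A;C;q,z)`. -/
noncomputable def phi11 (q A C z : ℂ) : ℂ :=
  ∑' k : ℕ, qPoch q A k / (qPoch q C k * qPoch q q k) *
    (-1) ^ k * q ^ (k * (k - 1) / 2) * z ^ k

/- ### auxiliary lemmas -/

lemma aux_geom_le (t : ℝ) (h0 : 0 ≤ t) (h1 : t < 1) (n : ℕ) :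
    ∑ i ∈ Finset.range n, t ^ i ≤ 1 / (1 - t) := by
  have h2 : 0 < 1 - t := by linarith
  rw [le_div_iff₀ h2]
  have h3 := geom_sum_mul t n
  have h4 : (0:ℝ) ≤ t ^ n := pow_nonneg h0 n
  nlinarith

lemma qPoch_succ (q z : ℂ) (k : ℕ) :
    qPoch q z (k + 1) = (1 - z) * qPoch q (q * z) k := by
  unfold qPoch
  rw [Finset.prod_range_succ']
  simp only [pow_zero, mul_one]
  rw [mul_comm]
  congr 1
  exact Finset.prod_congr rfl fun i _ => by rw [pow_succ']; ring

lemma qPoch_succ_last (q z : ℂ) (k : ℕ) :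
    qPoch q z (k + 1) = qPoch q z k * (1 - z * q ^ k) :=
  Finset.prod_range_succ _ _

lemma one_sub_pow_ne (q : ℂ) (hq1 : ‖q‖ < 1) (k : ℕ) :
    (1 : ℂ) - q ^ (k + 1) ≠ 0 := by
  have h : ‖q ^ (k+1)‖ < 1 := by
    rw [norm_pow]
    exact pow_lt_one₀ (norm_nonneg q) hq1 (Nat.succ_ne_zero k)
  intro h0
  have : q ^ (k+1) = 1 := by linear_combination -h0
  rw [this] at h; simp at h

lemma one_sub_q_ne (q : ℂ) (hq1 : ‖q‖ < 1) : (1 : ℂ) - q ≠ 0 := by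
  intro h0
  have : q = 1 := by linear_combination -h0
  rw [this] at hq1; simp at hq1

/-- uniform upper bound for partial q-Pochhammer products -/
lemma qPoch_abs_le (q z : ℂ) (hq1 : ‖q‖ < 1) (k : ℕ) :
    ‖qPoch q z k‖ ≤ Real.exp (‖z‖ / (1 - ‖q‖)) := by
  have h2 : 0 < 1 - ‖q‖ := by linarith
  unfold qPoch
  rw [norm_prod]
  calc ∏ r ∈ Finset.range k, ‖1 - z * q ^ r‖
      ≤ ∏ r ∈ Finset.range k, Real.exp (‖z‖ * ‖q‖ ^ r) := by
        refine Finset.prod_le_prod (fun r _ => norm_nonneg _) (fun r _ => ?_)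
        have h3 : ‖1 - z * q ^ r‖ ≤ 1 + ‖z‖ * ‖q‖ ^ r := by
          calc ‖1 - z * q ^ r‖ ≤ ‖1‖ + ‖z * q ^ r‖ :=
                norm_sub_le _ _
            _ = 1 + ‖z‖ * ‖q‖ ^ r := by
                rw [norm_one, norm_mul, norm_pow]
        refine h3.trans ?_
        have := Real.add_one_le_exp (‖z‖ * ‖q‖ ^ r)
        linarith
    _ = Real.exp (∑ r ∈ Finset.range k, ‖z‖ * ‖q‖ ^ r) :=
        (Real.exp_sum _ _).symm
    _ ≤ Real.exp (‖z‖ / (1 - ‖q‖)) := by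
        apply Real.exp_le_exp.mpr
        rw [← Finset.mul_sum]
        calc ‖z‖ * ∑ r ∈ Finset.range k, ‖q‖ ^ r
            ≤ ‖z‖ * (1 / (1 - ‖q‖)) := by
              apply mul_le_mul_of_nonneg_left
                (aux_geom_le _ (norm_nonneg q) hq1 k) (norm_nonneg z)
          _ = ‖z‖ / (1 - ‖q‖) := by ring

lemma exp_neg_two_le (t : ℝ) (h0 : 0 ≤ t) (h2 : t ≤ 1/2) :
    Real.exp (-(2 * t)) ≤ 1 - t := by
  have h1 : Real.exp (-(2*t)) * Real.exp (2*t) = 1 := by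
    rw [← Real.exp_add]; norm_num
  have h3 := Real.add_one_le_exp (2*t)
  have h4 := Real.exp_pos (2*t)
  nlinarith [Real.exp_pos (-(2*t))]

/-- tail product lower bound -/
lemma qPoch_tail_ge (q z : ℂ) (hq1 : ‖q‖ < 1) (R k : ℕ)
    (hz : ‖z‖ * ‖q‖ ^ R ≤ 1/2) :
    Real.exp (-(2 * (‖z‖ * ‖q‖ ^ R / (1 - ‖q‖)))) ≤
      ‖∏ r ∈ Finset.Ico R k, (1 - z * q ^ r)‖ := by
  have hq0 : (0:ℝ) ≤ ‖q‖ := norm_nonneg q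
  have hz0 : (0:ℝ) ≤ ‖z‖ := norm_nonneg z
  have h2 : 0 < 1 - ‖q‖ := by linarith
  have hterm : ∀ r, R ≤ r → ‖z‖ * ‖q‖ ^ r ≤ 1/2 := by
    intro r hr
    refine le_trans ?_ hz
    apply mul_le_mul_of_nonneg_left _ hz0
    exact pow_le_pow_of_le_one hq0 hq1.le hr
  have hterm0 : ∀ r, (0:ℝ) ≤ ‖z‖ * ‖q‖ ^ r := fun r =>
    mul_nonneg hz0 (pow_nonneg hq0 r)
  calc Real.exp (-(2 * (‖z‖ * ‖q‖ ^ R / (1 - ‖q‖))))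
      ≤ Real.exp (-(2 * ∑ r ∈ Finset.Ico R k, ‖z‖ * ‖q‖ ^ r)) := by
        apply Real.exp_le_exp.mpr
        apply neg_le_neg
        apply mul_le_mul_of_nonneg_left _ (by norm_num : (0:ℝ) ≤ 2)
        rw [Finset.sum_Ico_eq_sum_range]
        calc ∑ i ∈ Finset.range (k - R), ‖z‖ * ‖q‖ ^ (R + i)
            = ‖z‖ * ‖q‖ ^ R *
                ∑ i ∈ Finset.range (k - R), ‖q‖ ^ i := by
              rw [Finset.mul_sum]
              refine Finset.sum_congr rfl fun i _ => ?_
              rw [pow_add]; ring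
          _ ≤ ‖z‖ * ‖q‖ ^ R * (1 / (1 - ‖q‖)) :=
              mul_le_mul_of_nonneg_left (aux_geom_le _ hq0 hq1 _) (hterm0 R)
          _ = ‖z‖ * ‖q‖ ^ R / (1 - ‖q‖) := by ring
    _ = ∏ r ∈ Finset.Ico R k, Real.exp (-(2 * (‖z‖ * ‖q‖ ^ r))) := by
        rw [← Real.exp_sum]
        congr 1
        rw [Finset.mul_sum, ← Finset.sum_neg_distrib]
    _ ≤ ∏ r ∈ Finset.Ico R k, (1 - ‖z‖ * ‖q‖ ^ r) := by
        refine Finset.prod_le_prod (fun r _ => (Real.exp_pos _).le) (fun r hr => ?_)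
        exact exp_neg_two_le _ (hterm0 r) (hterm r (Finset.mem_Ico.mp hr).1)
    _ ≤ ∏ r ∈ Finset.Ico R k, ‖1 - z * q ^ r‖ := by
        refine Finset.prod_le_prod (fun r hr => ?_) (fun r hr => ?_)
        · have := hterm r (Finset.mem_Ico.mp hr).1; linarith
        · have h5 : ‖z * q ^ r‖ = ‖z‖ * ‖q‖ ^ r := by
            rw [norm_mul, norm_pow]
          have h6 : ‖(1:ℂ)‖ - ‖z * q ^ r‖ ≤ ‖(1:ℂ) - z * q ^ r‖ := norm_sub_norm_le _ _
          simp only [norm_one] at h6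
          rw [h5] at h6
          linarith
    _ = ‖∏ r ∈ Finset.Ico R k, (1 - z * q ^ r)‖ := (norm_prod _ _).symm

/-- positive uniform lower bound for nonvanishing partial q-Pochhammer products -/
lemma qPoch_lower (q z : ℂ) (hq1 : ‖q‖ < 1) :
    ∃ δ : ℝ, 0 < δ ∧ ∀ k, qPoch q z k = 0 ∨ δ ≤ ‖qPoch q z k‖ := by
  have hq0 : (0:ℝ) ≤ ‖q‖ := norm_nonneg q
  have hz0 : (0:ℝ) ≤ ‖z‖ := norm_nonneg z
  obtain ⟨R, hR⟩ : ∃ R : ℕ, ‖z‖ * ‖q‖ ^ R ≤ 1/2 := by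
    obtain ⟨n, hn⟩ := exists_pow_lt_of_lt_one
      (show (0:ℝ) < 1 / (2 * (‖z‖ + 1)) by positivity) hq1
    refine ⟨n, ?_⟩
    have h1 : ‖z‖ * ‖q‖ ^ n ≤
        (‖z‖ + 1) * (1 / (2 * (‖z‖ + 1))) := by
      apply mul_le_mul (by linarith) hn.le (pow_nonneg hq0 n) (by linarith)
    have h2 : (‖z‖ + 1) * (1 / (2 * (‖z‖ + 1))) = 1/2 := by
      field_simp
    linarith
  have h2 : 0 < 1 - ‖q‖ := by linarith
  set δ₂ : ℝ := Real.exp (-(2 * (‖z‖ * ‖q‖ ^ R / (1 - ‖q‖))))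
    with hδ₂
  have hδ₂pos : 0 < δ₂ := Real.exp_pos _
  have hδ₂le1 : δ₂ ≤ 1 := by
    have hT : 0 ≤ ‖z‖ * ‖q‖ ^ R / (1 - ‖q‖) := by positivity
    have h3 : δ₂ ≤ Real.exp 0 := Real.exp_le_exp.mpr (by linarith)
    simpa using h3
  have hne : (Finset.range (R + 1)).Nonempty := ⟨0, by simp⟩
  set m : ℝ := (Finset.range (R + 1)).inf' hne
    (fun k => if qPoch q z k = 0 then 1 else ‖qPoch q z k‖) with hm
  have hmpos : 0 < m := by
    rw [hm, Finset.lt_inf'_iff]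
    intro i _
    by_cases h : qPoch q z i = 0
    · simp [h]
    · rw [if_neg h]
      exact norm_pos_iff.mpr h
  have hmle : ∀ k, k ≤ R → qPoch q z k ≠ 0 → m ≤ ‖qPoch q z k‖ := by
    intro k hk h
    have h2 := Finset.inf'_le
      (fun k => if qPoch q z k = 0 then 1 else ‖qPoch q z k‖)
      (Finset.mem_range.mpr (Nat.lt_succ_of_le hk))
    rw [if_neg h] at h2
    exact h2
  refine ⟨m * δ₂, mul_pos hmpos hδ₂pos, fun k => ?_⟩
  by_cases hk : k ≤ R
  · by_cases h : qPoch q z k = 0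
    · exact Or.inl h
    · right
      calc m * δ₂ ≤ m * 1 := by nlinarith
        _ = m := mul_one m
        _ ≤ ‖qPoch q z k‖ := hmle k hk h
  · push_neg at hk
    have hsplit : qPoch q z R * ∏ r ∈ Finset.Ico R k, (1 - z * q ^ r) = qPoch q z k :=
      Finset.prod_range_mul_prod_Ico _ hk.le
    by_cases h : qPoch q z R = 0
    · left; rw [← hsplit, h, zero_mul]
    · right
      rw [← hsplit, norm_mul]
      exact mul_le_mul (hmle R le_rfl h) (qPoch_tail_ge q z hq1 R k hR)
        hδ₂pos.le (norm_nonneg _)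

/-- summability of the Ψ₁ series -/
lemma summable_psi1 (q p A B C D x y : ℂ) (hq1 : ‖q‖ < 1)
    (hp1 : ‖p‖ < 1) (hx : ‖x‖ < 1) (hy : ‖y‖ < 1) :
    Summable (fun kl : ℕ × ℕ =>
      qPoch q A (kl.1 + kl.2) * qPoch p B kl.2 /
        (qPoch p C kl.2 * qPoch q D kl.1 * qPoch q q kl.1 * qPoch p p kl.2) *
        x ^ kl.1 * y ^ kl.2) := by
  obtain ⟨δC, hδC, hC⟩ := qPoch_lower p C hp1
  obtain ⟨δD, hδD, hD⟩ := qPoch_lower q D hq1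
  obtain ⟨δq, hδq, hqq⟩ := qPoch_lower q q hq1
  obtain ⟨δp, hδp, hpp⟩ := qPoch_lower p p hp1
  set MA : ℝ := Real.exp (‖A‖ / (1 - ‖q‖)) with hMA
  set MB : ℝ := Real.exp (‖B‖ / (1 - ‖p‖)) with hMB
  have hMApos : 0 < MA := Real.exp_pos _
  have hMBpos : 0 < MB := Real.exp_pos _
  set K : ℝ := MA * MB / (δC * δD * δq * δp) with hK
  have hKpos : 0 < K := by positivity
  have hmaj : Summable (fun kl : ℕ × ℕ => K * (‖x‖ ^ kl.1 * ‖y‖ ^ kl.2)) := by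
    apply Summable.mul_left
    apply summable_mul_of_summable_norm (f := fun k : ℕ => ‖x‖ ^ k)
      (g := fun k : ℕ => ‖y‖ ^ k)
    · simp only [Real.norm_eq_abs]
      apply Summable.congr (summable_geometric_of_lt_one (norm_nonneg x) hx)
      intro n
      rw [abs_of_nonneg (pow_nonneg (norm_nonneg x) n)]
    · simp only [Real.norm_eq_abs]
      apply Summable.congr (summable_geometric_of_lt_one (norm_nonneg y) hy)
      intro n
      rw [abs_of_nonneg (pow_nonneg (norm_nonneg y) n)]
  apply Summable.of_norm
  apply Summable.of_nonneg_of_le (fun _ => norm_nonneg _) _ hmaj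
  rintro ⟨k, l⟩
  simp only [norm_mul, norm_pow]
  by_cases hd : qPoch p C l * qPoch q D k * qPoch q q k * qPoch p p l = 0
  · rw [hd]
    simp only [div_zero, norm_zero, zero_mul]
    positivity
  · have hC' : qPoch p C l ≠ 0 := fun h => hd (by rw [h]; ring)
    have hD' : qPoch q D k ≠ 0 := fun h => hd (by rw [h]; ring)
    have hq' : qPoch q q k ≠ 0 := fun h => hd (by rw [h]; ring)
    have hp' : qPoch p p l ≠ 0 := fun h => hd (by rw [h]; ring)
    have hnum : ‖qPoch q A (k + l) * qPoch p B l‖ ≤ MA * MB := by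
      rw [norm_mul]
      exact mul_le_mul (qPoch_abs_le q A hq1 _) (qPoch_abs_le p B hp1 _)
        (norm_nonneg _) hMApos.le
    have hdenge : δC * δD * δq * δp ≤
        ‖qPoch p C l * qPoch q D k * qPoch q q k * qPoch p p l‖ := by
      rw [norm_mul, norm_mul, norm_mul]
      have h1 := (hC l).resolve_left hC'
      have h2 := (hD k).resolve_left hD'
      have h3 := (hqq k).resolve_left hq'
      have h4 := (hpp l).resolve_left hp'
      gcongr <;> positivity
    have hfrac : ‖qPoch q A (k + l) * qPoch p B l /
        (qPoch p C l * qPoch q D k * qPoch q q k * qPoch p p l)‖ ≤ K := by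
      rw [norm_div, hK]
      exact div_le_div₀ (by positivity) hnum (by positivity) hdenge
    calc ‖qPoch q A (k + l) * qPoch p B l /
            (qPoch p C l * qPoch q D k * qPoch q q k * qPoch p p l)‖ *
          ‖x‖ ^ k * ‖y‖ ^ l
        ≤ K * ‖x‖ ^ k * ‖y‖ ^ l := by
          gcongr <;> positivity
      _ = K * (‖x‖ ^ k * ‖y‖ ^ l) := by ring


lemma qDiff_apply (q : ℂ) (f : ℂ → ℂ) (x : ℂ) :
    qDiff q f x = (f x - f (q * x)) / ((1 - q) * x) := rfl

lemma alg_step (q A D x y PA PB PC PD Pq Pp : ℂ) (hx0 : x ≠ 0) (k l : ℕ)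
    (hu : (1:ℂ) - q ^ (k+1) ≠ 0) :
    ((1 - A) * PA * PB / (PC * ((1 - D) * PD) * (Pq * (1 - q ^ (k+1))) * Pp) *
        x ^ (k + 1) * y ^ l -
      (1 - A) * PA * PB / (PC * ((1 - D) * PD) * (Pq * (1 - q ^ (k+1))) * Pp) *
        (q * x) ^ (k + 1) * y ^ l) / ((1 - q) * x) =
    (1 - A) / ((1 - q) * (1 - D)) * (PA * PB / (PC * PD * Pq * Pp) * x ^ k * y ^ l) := by
  rw [mul_pow q x (k+1), pow_succ x k]
  set s := q ^ (k+1) with hs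
  set Xk := x ^ k with hXk
  set Yl := y ^ l with hYl
  have hsx : (1 - s) * x ≠ 0 := mul_ne_zero hu hx0
  simp only [div_mul_eq_mul_div, div_sub_div_same, div_div, ← mul_div_assoc]
  rw [show (1 - A) * PA * PB * (Xk * x) * Yl - (1 - A) * PA * PB * (s * (Xk * x)) * Yl
      = ((1 - A) * PA * PB * Xk * Yl) * ((1 - s) * x) by ring,
    show PC * ((1 - D) * PD) * (Pq * (1 - s)) * Pp * ((1 - q) * x)
      = ((1 - q) * (1 - D) * (PC * PD * Pq * Pp)) * ((1 - s) * x) by ring,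
    mul_div_mul_right _ _ hsx]
  congr 1
  ring

/-- per-term identity for the shifted index -/
lemma term_step (q p A B C D x y : ℂ) (hq1 : ‖q‖ < 1) (hx0 : x ≠ 0) (k l : ℕ) :
    (qPoch q A (k + 1 + l) * qPoch p B l /
        (qPoch p C l * qPoch q D (k + 1) * qPoch q q (k + 1) * qPoch p p l) *
        x ^ (k + 1) * y ^ l -
      qPoch q A (k + 1 + l) * qPoch p B l /
        (qPoch p C l * qPoch q D (k + 1) * qPoch q q (k + 1) * qPoch p p l) *
        (q * x) ^ (k + 1) * y ^ l) / ((1 - q) * x) =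
    (1 - A) / ((1 - q) * (1 - D)) *
      (qPoch q (q * A) (k + l) * qPoch p B l /
        (qPoch p C l * qPoch q (q * D) k * qPoch q q k * qPoch p p l) *
        x ^ k * y ^ l) := by
  have hu : (1 : ℂ) - q ^ (k + 1) ≠ 0 := one_sub_pow_ne q hq1 k
  have hv : (1 : ℂ) - q ≠ 0 := one_sub_q_ne q hq1
  have hA : qPoch q A (k + 1 + l) = (1 - A) * qPoch q (q * A) (k + l) := by
    rw [show k + 1 + l = (k + l) + 1 by omega, qPoch_succ]
  have hDk : qPoch q D (k + 1) = (1 - D) * qPoch q (q * D) k := qPoch_succ q D k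
  have hqk : qPoch q q (k + 1) = qPoch q q k * (1 - q ^ (k + 1)) := by
    rw [qPoch_succ_last, pow_succ']
  rw [hA, hDk, hqk]
  exact alg_step q A D x y (qPoch q (q * A) (k + l)) (qPoch p B l) (qPoch p C l)
    (qPoch q (q * D) k) (qPoch q q k) (qPoch p p l) hx0 k l hu

/-- the first-order q-difference identity, for all small nonzero x -/
lemma psi1_qDiff (q p A B C D y : ℂ) (hq1 : ‖q‖ < 1)
    (hp1 : ‖p‖ < 1) (hy : ‖y‖ < 1) (x : ℂ)
    (hx0 : x ≠ 0) (hx : ‖x‖ < 1) :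
    qDiff q (fun t => Psi1 q p A B C D t y) x =
      (1 - A) / ((1 - q) * (1 - D)) * Psi1 q p (q * A) B C (q * D) x y := by
  have hqx : ‖q * x‖ < 1 := by
    rw [norm_mul]
    calc ‖q‖ * ‖x‖ ≤ 1 * ‖x‖ :=
          mul_le_mul_of_nonneg_right hq1.le (norm_nonneg x)
      _ = ‖x‖ := one_mul _
      _ < 1 := hx
  have hs1 := summable_psi1 q p A B C D x y hq1 hp1 hx hy
  have hs2 := summable_psi1 q p A B C D (q * x) y hq1 hp1 hqx hy
  unfold qDiff
  beta_reduce
  unfold Psi1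
  rw [← Summable.tsum_sub hs1 hs2, ← tsum_div_const, ← tsum_mul_left]
  apply tsum_eq_tsum_of_ne_zero_bij
    (fun kl => ((kl : ℕ × ℕ).1 + 1, (kl : ℕ × ℕ).2))
  · rintro ⟨⟨k1, l1⟩, _⟩ ⟨⟨k2, l2⟩, _⟩ h
    simp only [Prod.mk.injEq] at h
    apply Subtype.ext
    simp only [Prod.mk.injEq]
    exact ⟨by omega, h.2⟩
  · rintro ⟨k, l⟩ hkl
    simp only [Function.mem_support] at hkl
    cases k with
    | zero =>
      exfalso
      apply hkl
      simp
    | succ k =>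
      refine ⟨⟨(k, l), ?_⟩, rfl⟩
      simp only [Function.mem_support]
      intro h0
      apply hkl
      rw [term_step q p A B C D x y hq1 hx0 k l, h0]
  · rintro ⟨⟨k, l⟩, _⟩
    exact term_step q p A B C D x y hq1 hx0 k l

/-- the iterated identity -/
lemma psi1_iter (q p a b c d y : ℂ) (hq0 : q ≠ 0) (hq1 : ‖q‖ < 1)
    (hp1 : ‖p‖ < 1) (hy : ‖y‖ < 1) (r : ℕ) :
    ∀ x : ℂ, x ≠ 0 → ‖x‖ < 1 →
      (qDiff q)^[r] (fun t => Psi1 q p (q ^ a) (p ^ b) (p ^ c) (q ^ d) t y) x =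
        qPoch q (q ^ a) r / ((1 - q) ^ r * qPoch q (q ^ d) r) *
          Psi1 q p (q ^ (a + (r : ℂ))) (p ^ b) (p ^ c) (q ^ (d + (r : ℂ))) x y := by
  induction r with
  | zero =>
    intro x hx0 hx
    simp [qPoch]
  | succ n ih =>
    intro x hx0 hx
    rw [show (qDiff q)^[n+1] (fun t => Psi1 q p (q ^ a) (p ^ b) (p ^ c) (q ^ d) t y) =
      qDiff q ((qDiff q)^[n] (fun t => Psi1 q p (q ^ a) (p ^ b) (p ^ c) (q ^ d) t y))
      from Function.iterate_succ_apply' _ _ _]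
    have hqx0 : q * x ≠ 0 := mul_ne_zero hq0 hx0
    have hqx1 : ‖q * x‖ < 1 := by
      rw [norm_mul]
      calc ‖q‖ * ‖x‖ ≤ 1 * ‖x‖ :=
            mul_le_mul_of_nonneg_right hq1.le (norm_nonneg x)
        _ = ‖x‖ := one_mul _
        _ < 1 := hx
    rw [qDiff_apply]
    rw [ih x hx0 hx, ih (q * x) hqx0 hqx1, ← mul_sub, mul_div_assoc]
    have hkey := psi1_qDiff q p (q ^ (a + (n:ℂ))) (p ^ b) (p ^ c) (q ^ (d + (n:ℂ))) y
      hq1 hp1 hy x hx0 hx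
    rw [qDiff_apply] at hkey
    beta_reduce at hkey
    rw [hkey]
    have hA : q * q ^ (a + (n:ℂ)) = q ^ (a + ((n+1 : ℕ) : ℂ)) := by
      rw [Complex.cpow_add _ _ hq0, Complex.cpow_add _ _ hq0, Complex.cpow_natCast,
        Complex.cpow_natCast, pow_succ]
      ring
    have hD : q * q ^ (d + (n:ℂ)) = q ^ (d + ((n+1 : ℕ) : ℂ)) := by
      rw [Complex.cpow_add _ _ hq0, Complex.cpow_add _ _ hq0, Complex.cpow_natCast,
        Complex.cpow_natCast, pow_succ]
      ring
    rw [hA, hD, ← mul_assoc]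
    congr 1
    have hA2 : q ^ (a + (n:ℂ)) = q ^ a * q ^ n := by
      rw [Complex.cpow_add _ _ hq0, Complex.cpow_natCast]
    have hD2 : q ^ (d + (n:ℂ)) = q ^ d * q ^ n := by
      rw [Complex.cpow_add _ _ hq0, Complex.cpow_natCast]
    rw [hA2, hD2, qPoch_succ_last q (q ^ a) n, qPoch_succ_last q (q ^ d) n, pow_succ,
      div_mul_div_comm]
    congr 1
    ring

theorem stmt7 (q p a b c d x y : ℂ) (r : ℕ)
    (hq0 : 0 < ‖q‖) (hq1 : ‖q‖ < 1)
    (hp0 : 0 < ‖p‖) (hp1 : ‖p‖ < 1)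
    (hx : ‖x‖ < 1) (hy : ‖y‖ < 1) (hx0 : x ≠ 0) :
    qDiff q (fun t => Psi1 q p (q ^ a) (p ^ b) (p ^ c) (q ^ d) t y) x =
        (1 - q ^ a) / ((1 - q) * (1 - q ^ d)) *
          Psi1 q p (q ^ (a + 1)) (p ^ b) (p ^ c) (q ^ (d + 1)) x y ∧
      (qDiff q)^[r] (fun t => Psi1 q p (q ^ a) (p ^ b) (p ^ c) (q ^ d) t y) x =
        qPoch q (q ^ a) r / ((1 - q) ^ r * qPoch q (q ^ d) r) *
          Psi1 q p (q ^ (a + (r : ℂ))) (p ^ b) (p ^ c) (q ^ (d + (r : ℂ))) x y := by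
  have hq0' : q ≠ 0 := by
    intro h; rw [h] at hq0; simp at hq0
  constructor
  · rw [psi1_qDiff q p (q ^ a) (p ^ b) (p ^ c) (q ^ d) y hq1 hp1 hy x hx0 hx]
    congr 2
    · rw [Complex.cpow_add _ _ hq0', Complex.cpow_one, mul_comm]
    · rw [Complex.cpow_add _ _ hq0', Complex.cpow_one, mul_comm]
  · exact psi1_iter q p a b c d y hq0' hq1 hp1 hy r x hx0 hx
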